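/- For all i, j ∈ I with a_{ij} = −1 and every m ∈ ℤ, one has σ_i(σ_j(σ_i(E_{i,m}))) = E_{j,m+1}K_{j,m}^{−1} in 𝒜. -/

import Mathlib

/-!
Braid group action on the twisted semi-derived Hall algebra (Contu, arXiv:2410.18604).

We work with the algebra `𝒜 = 𝒮𝒟ℋ_tw(C^b(𝒫))` given by its presentation
(Proposition `prop_presenentation_semiderived_E_i` of the paper): generators
`E_{i,m}`, `K_{i,m}`, `K_{i,m}⁻¹` (`i ∈ I`, `m ∈ ℤ`) over `F = ℚ(v^{1/2})`,
subject to the relations (SD0)–(SD5).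
-/

noncomputable section

namespace SDHall

/-- The field `ℚ(v^{1/2})` of rational functions over `ℚ` in one indeterminate `v^{1/2}`. -/
abbrev F₀ : Type := RatFunc ℚ

/-- The indeterminate `v^{1/2}`. -/
def sq : F₀ := RatFunc.X

/-- `v := (v^{1/2})²`. -/
def v : F₀ := sq ^ 2

/-- The sign `(-1)^n` for an integer `n`. -/
def sgn (n : ℤ) : ℤ := (((-1 : ℤˣ) ^ n : ℤˣ) : ℤ)

/-- Generators `E_{i,m}`, `K_{i,m}`, `K_{i,m}⁻¹` of the presented algebra. -/
inductive Gen (I : Type) : Type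
  | E : I → ℤ → Gen I
  | K : I → ℤ → Gen I
  | Kinv : I → ℤ → Gen I

variable {I : Type}

def e (i : I) (m : ℤ) : FreeAlgebra F₀ (Gen I) := FreeAlgebra.ι F₀ (Gen.E i m)
def κ (i : I) (m : ℤ) : FreeAlgebra F₀ (Gen I) := FreeAlgebra.ι F₀ (Gen.K i m)
def κ' (i : I) (m : ℤ) : FreeAlgebra F₀ (Gen I) := FreeAlgebra.ι F₀ (Gen.Kinv i m)

/-- The defining relations (SD0)–(SD5) of the twisted semi-derived Hall algebra:
(SD0) `K_{i,m}K_{i,m}⁻¹ = 1 = K_{i,m}⁻¹K_{i,m}`;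
(SD1) each `K_{i,m}` is central;
(SD2) `E_{i,m}E_{j,m} = E_{j,m}E_{i,m}` if `a_{ij} = 0`;
(SD3) `E_{i,m}²E_{j,m} − (v+v⁻¹)E_{i,m}E_{j,m}E_{i,m} + E_{j,m}E_{i,m}² = 0` if `a_{ij} = −1`;
(SD4) `E_{i,m+1}E_{j,m} = v^{a_{ij}}E_{j,m}E_{i,m+1} + δ_{ij}(1−v²)K_{i,m}`
      (split into the cases `i ≠ j` and `i = j`);
(SD5) `E_{j,r}E_{i,l} = v^{−(−1)^{r−l}a_{ij}}E_{i,l}E_{j,r}` for `r > l+1`. -/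
inductive Rel (a : I → I → ℤ) : FreeAlgebra F₀ (Gen I) → FreeAlgebra F₀ (Gen I) → Prop
  | sd0a (i : I) (m : ℤ) : Rel a (κ i m * κ' i m) 1
  | sd0b (i : I) (m : ℤ) : Rel a (κ' i m * κ i m) 1
  | sd1 (i : I) (m : ℤ) (x : FreeAlgebra F₀ (Gen I)) : Rel a (κ i m * x) (x * κ i m)
  | sd2 (i j : I) (m : ℤ) : a i j = 0 → Rel a (e i m * e j m) (e j m * e i m)
  | sd3 (i j : I) (m : ℤ) : a i j = -1 →
      Rel a (e i m ^ 2 * e j m - (v + v⁻¹) • (e i m * e j m * e i m) + e j m * e i m ^ 2) 0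
  | sd4_ne (i j : I) (m : ℤ) : i ≠ j →
      Rel a (e i (m + 1) * e j m) ((v ^ (a i j)) • (e j m * e i (m + 1)))
  | sd4_eq (i : I) (m : ℤ) :
      Rel a (e i (m + 1) * e i m)
        ((v ^ (a i i)) • (e i m * e i (m + 1)) + ((1 : F₀) - v ^ 2) • κ i m)
  | sd5 (i j : I) (r l : ℤ) : r > l + 1 →
      Rel a (e j r * e i l) ((v ^ (-(sgn (r - l)) * a i j)) • (e i l * e j r))

/-- The twisted semi-derived Hall algebra `𝒜`, presented by generators and relations. -/
abbrev A (a : I → I → ℤ) : Type := RingQuot (Rel a)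

/-- The generator `E_{i,m}` of `𝒜`. -/
def E (a : I → I → ℤ) (i : I) (m : ℤ) : A a := RingQuot.mkAlgHom F₀ (Rel a) (e i m)

/-- The generator `K_{i,m}` of `𝒜`. -/
def K (a : I → I → ℤ) (i : I) (m : ℤ) : A a := RingQuot.mkAlgHom F₀ (Rel a) (κ i m)

/-- The generator `K_{i,m}⁻¹` of `𝒜`. -/
def Kinv (a : I → I → ℤ) (i : I) (m : ℤ) : A a := RingQuot.mkAlgHom F₀ (Rel a) (κ' i m)

/-- `a` is a simply-laced generalized Cartan matrix: symmetric, `a_{ii} = 2`,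
and `a_{ij} ∈ {0, −1}` for `i ≠ j`. -/
def IsCartan (a : I → I → ℤ) : Prop :=
  (∀ i j, a i j = a j i) ∧ (∀ i, a i i = 2) ∧ ∀ i j, i ≠ j → a i j = 0 ∨ a i j = -1

/-- The element `(v^{1/2}E_{i,m}E_{j,m} − v^{−1/2}E_{j,m}E_{i,m})/(v − v^{−1})` of `𝒜`. -/
def T (a : I → I → ℤ) (i j : I) (m : ℤ) : A a :=
  (v - v⁻¹)⁻¹ • (sq • (E a i m * E a j m) - sq⁻¹ • (E a j m * E a i m))

/-- The defining formulas for the braid group operator `σᵢ` on the generators: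
`σᵢ(E_{i,m}) = E_{i,m+1}K_{i,m}⁻¹`;
`σᵢ(E_{j,m}) = (v^{1/2}E_{i,m}E_{j,m} − v^{−1/2}E_{j,m}E_{i,m})/(v − v^{−1})` if `a_{ij} = −1`;
`σᵢ(E_{j,m}) = E_{j,m}` if `a_{ij} = 0`;
`σᵢ(K_{i,m}) = K_{i,m}⁻¹`; `σᵢ(K_{j,m}) = K_{i,m}K_{j,m}` if `a_{ij} = −1`;
`σᵢ(K_{j,m}) = K_{j,m}` if `a_{ij} = 0`. -/
def SigmaSpec (a : I → I → ℤ) (i : I) (σ : A a →ₐ[F₀] A a) : Prop :=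
  (∀ m : ℤ, σ (E a i m) = E a i (m + 1) * Kinv a i m) ∧
  (∀ (j : I) (m : ℤ), a i j = -1 → σ (E a j m) = T a i j m) ∧
  (∀ (j : I) (m : ℤ), a i j = 0 → σ (E a j m) = E a j m) ∧
  (∀ m : ℤ, σ (K a i m) = Kinv a i m) ∧
  (∀ (j : I) (m : ℤ), a i j = -1 → σ (K a j m) = K a i m * K a j m) ∧
  (∀ (j : I) (m : ℤ), a i j = 0 → σ (K a j m) = K a j m)

/-- The defining formulas for the inverse operator `σᵢ'` on the generators:
`σᵢ'(E_{i,m}) = E_{i,m−1}K_{i,m−1}⁻¹`;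
`σᵢ'(E_{j,m}) = (v^{1/2}E_{j,m}E_{i,m} − v^{−1/2}E_{i,m}E_{j,m})/(v − v^{−1})` if `a_{ij} = −1`;
`σᵢ'(E_{j,m}) = E_{j,m}` if `a_{ij} = 0`;
`σᵢ'(K_{i,m}) = K_{i,m}⁻¹`; `σᵢ'(K_{j,m}) = K_{i,m}K_{j,m}` if `a_{ij} = −1`;
`σᵢ'(K_{j,m}) = K_{j,m}` if `a_{ij} = 0`. -/
def SigmaSpec' (a : I → I → ℤ) (i : I) (σ : A a →ₐ[F₀] A a) : Prop :=
  (∀ m : ℤ, σ (E a i m) = E a i (m - 1) * Kinv a i (m - 1)) ∧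
  (∀ (j : I) (m : ℤ), a i j = -1 → σ (E a j m) = T a j i m) ∧
  (∀ (j : I) (m : ℤ), a i j = 0 → σ (E a j m) = E a j m) ∧
  (∀ m : ℤ, σ (K a i m) = Kinv a i m) ∧
  (∀ (j : I) (m : ℤ), a i j = -1 → σ (K a j m) = K a i m * K a j m) ∧
  (∀ (j : I) (m : ℤ), a i j = 0 → σ (K a j m) = K a j m)

end SDHall

open SDHall
section Aux

variable {I : Type} {a : I → I → ℤ}

lemma sq_ne : (SDHall.sq : F₀) ≠ 0 := RatFunc.X_ne_zero

lemma sq4_ne_one : (SDHall.sq : F₀)^4 ≠ 1 := by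
  intro h
  have h' : (RatFunc.X : RatFunc ℚ)^4 = 1 := h
  have h2 : (Polynomial.X : Polynomial ℚ)^4 = 1 := by
    apply RatFunc.algebraMap_injective ℚ
    rw [map_pow, map_one, RatFunc.algebraMap_X]
    exact h'
  have := congrArg Polynomial.natDegree h2
  simp at this

lemma sq4_sub_ne : (SDHall.sq : F₀)^4 - 1 ≠ 0 := sub_ne_zero.mpr sq4_ne_one

lemma v_ne : (v : F₀) ≠ 0 := pow_ne_zero 2 sq_ne

lemma v_sub_inv : (v : F₀) - v⁻¹ = ((SDHall.sq:F₀)^4 - 1)/(SDHall.sq:F₀)^2 := by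
  have hvs : (v:F₀) = SDHall.sq^2 := rfl
  have hs := sq_ne
  rw [hvs]
  field_simp

lemma vvinv_ne : (v : F₀) - v⁻¹ ≠ 0 := by
  rw [v_sub_inv]
  exact div_ne_zero sq4_sub_ne (pow_ne_zero 2 sq_ne)

lemma c_val : ((v : F₀) - v⁻¹)⁻¹ = (SDHall.sq:F₀)^2 / ((SDHall.sq:F₀)^4 - 1) := by
  rw [v_sub_inv, ← one_div, one_div_div]

lemma K_Kinv (i : I) (m : ℤ) : K a i m * Kinv a i m = 1 := by
  have := RingQuot.mkAlgHom_rel F₀ (Rel.sd0a (a := a) i m)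
  simpa only [K, Kinv, map_mul, map_one] using this

lemma Kinv_K (i : I) (m : ℤ) : Kinv a i m * K a i m = 1 := by
  have := RingQuot.mkAlgHom_rel F₀ (Rel.sd0b (a := a) i m)
  simpa only [K, Kinv, map_mul, map_one] using this

lemma K_comm (i : I) (m : ℤ) (x : A a) : K a i m * x = x * K a i m := by
  obtain ⟨y, rfl⟩ := RingQuot.mkAlgHom_surjective F₀ (Rel a) x
  have := RingQuot.mkAlgHom_rel F₀ (Rel.sd1 (a := a) i m y)
  simpa only [K, map_mul] using this

lemma Kinv_comm (i : I) (m : ℤ) (x : A a) : Kinv a i m * x = x * Kinv a i m := by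
  have h1 : Kinv a i m * (K a i m * (x * Kinv a i m)) = x * Kinv a i m := by
    rw [← mul_assoc, Kinv_K, one_mul]
  calc Kinv a i m * x = Kinv a i m * (x * (K a i m * Kinv a i m)) := by rw [K_Kinv, mul_one]
    _ = Kinv a i m * (K a i m * (x * Kinv a i m)) := by
        rw [← mul_assoc x, ← K_comm, mul_assoc]
    _ = x * Kinv a i m := h1

lemma E_rel_eq (i : I) (m : ℤ) :
    E a i (m+1) * E a i m
      = (v ^ (a i i)) • (E a i m * E a i (m+1)) + ((1:F₀) - v^2) • K a i m := by
  have := RingQuot.mkAlgHom_rel F₀ (Rel.sd4_eq (a := a) i m)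
  simpa only [E, K, map_mul, map_add, map_smul] using this

lemma E_rel_ne (i j : I) (m : ℤ) (h : i ≠ j) :
    E a i (m+1) * E a j m = (v ^ (a i j)) • (E a j m * E a i (m+1)) := by
  have := RingQuot.mkAlgHom_rel F₀ (Rel.sd4_ne (a := a) i j m h)
  simpa only [E, map_mul, map_smul] using this

lemma sigma_Kinv (σ : A a →ₐ[F₀] A a) (i : I) (m : ℤ) (u w : A a)
    (hK : σ (K a i m) = u) (huw : u * w = 1) : σ (Kinv a i m) = w := by
  have h1 : σ (Kinv a i m) * σ (K a i m) = 1 := by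
    rw [← map_mul, Kinv_K, map_one]
  calc σ (Kinv a i m) = σ (Kinv a i m) * (u * w) := by rw [huw, mul_one]
    _ = (σ (Kinv a i m) * σ (K a i m)) * w := by rw [hK, mul_assoc]
    _ = w := by rw [h1, one_mul]

set_option maxHeartbeats 1000000 in
/-- The heart of the braid computation, in an arbitrary `F₀`-algebra. -/
lemma key {R : Type} [Ring R] [Algebra F₀ R] (x y z : R)
    (h1 : z * x = (v^2) • (x*z) + ((1:F₀) - v^2) • (1:R))
    (h2 : z * y = v⁻¹ • (y * z)) :
    (v - v⁻¹)⁻¹ • (SDHall.sq • (((v - v⁻¹)⁻¹ • (SDHall.sq • (x*y) - SDHall.sq⁻¹ • (y*x))) * z)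
      - SDHall.sq⁻¹ • (z * ((v - v⁻¹)⁻¹ • (SDHall.sq • (x*y) - SDHall.sq⁻¹ • (y*x))))) = y := by
  have hzxy : z * (x * y) = (v^2 * v⁻¹) • (x * (y * z)) + ((1:F₀) - v^2) • y := by
    rw [← mul_assoc, h1, add_mul, smul_mul_assoc, smul_mul_assoc, one_mul,
      mul_assoc, h2, mul_smul_comm, smul_smul]
  have hzyx : z * (y * x) = (v⁻¹ * v^2) • (y * (x * z)) + (v⁻¹ * ((1:F₀) - v^2)) • y := by
    rw [← mul_assoc, h2, smul_mul_assoc, mul_assoc, h1, mul_add, mul_smul_comm,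
      mul_smul_comm, mul_one, smul_add, smul_smul, smul_smul]
  have hPz : (SDHall.sq • (x*y) - SDHall.sq⁻¹ • (y*x)) * z
      = SDHall.sq • (x*(y*z)) - SDHall.sq⁻¹ • (y*(x*z)) := by
    rw [sub_mul, smul_mul_assoc, smul_mul_assoc, mul_assoc, mul_assoc]
  have hzP : z * (SDHall.sq • (x*y) - SDHall.sq⁻¹ • (y*x))
      = ((SDHall.sq*(v^2*v⁻¹)) • (x*(y*z)) + (SDHall.sq*((1:F₀)-v^2)) • y)
        - ((SDHall.sq⁻¹*(v⁻¹*v^2)) • (y*(x*z)) + (SDHall.sq⁻¹*(v⁻¹*((1:F₀)-v^2))) • y) := by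
    rw [mul_sub, mul_smul_comm, mul_smul_comm, hzxy, hzyx, smul_add, smul_add,
      smul_smul, smul_smul, smul_smul, smul_smul]
  rw [smul_mul_assoc, mul_smul_comm, hPz, hzP]
  simp only [smul_sub, smul_add, smul_smul]
  have hvs : (v:F₀) = SDHall.sq^2 := rfl
  have hs := sq_ne
  have hs4 := sq4_sub_ne
  have hb : ∀ k : ℕ, (SDHall.sq:F₀)^k * (SDHall.sq^4 - 1)^2 ≠ 0 := fun k =>
    mul_ne_zero (pow_ne_zero k hs) (pow_ne_zero 2 hs4)
  have hb1 : (SDHall.sq:F₀)^3 - SDHall.sq^7*2 + SDHall.sq^11 ≠ 0 := by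
    have e : (SDHall.sq:F₀)^3 - SDHall.sq^7*2 + SDHall.sq^11
        = SDHall.sq^3 * (SDHall.sq^4 - 1)^2 := by ring
    rw [e]; exact hb 3
  have hb2 : (SDHall.sq:F₀)^4 - SDHall.sq^8*2 + SDHall.sq^12 ≠ 0 := by
    have e : (SDHall.sq:F₀)^4 - SDHall.sq^8*2 + SDHall.sq^12
        = SDHall.sq^4 * (SDHall.sq^4 - 1)^2 := by ring
    rw [e]; exact hb 4
  have hb0 : (SDHall.sq:F₀)^2 - SDHall.sq^6*2 + SDHall.sq^10 ≠ 0 := by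
    have e : (SDHall.sq:F₀)^2 - SDHall.sq^6*2 + SDHall.sq^10
        = SDHall.sq^2 * (SDHall.sq^4 - 1)^2 := by ring
    rw [e]; exact hb 2
  have hb5 : (SDHall.sq:F₀)^5 - SDHall.sq^9*2 + SDHall.sq^13 ≠ 0 := by
    have e : (SDHall.sq:F₀)^5 - SDHall.sq^9*2 + SDHall.sq^13
        = SDHall.sq^5 * (SDHall.sq^4 - 1)^2 := by ring
    rw [e]; exact hb 5
  have hb6 : (SDHall.sq:F₀)^6 - SDHall.sq^10*2 + SDHall.sq^14 ≠ 0 := by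
    have e : (SDHall.sq:F₀)^6 - SDHall.sq^10*2 + SDHall.sq^14
        = SDHall.sq^6 * (SDHall.sq^4 - 1)^2 := by ring
    rw [e]; exact hb 6
  have f1 : (v - v⁻¹)⁻¹ * (SDHall.sq * ((v - v⁻¹)⁻¹ * SDHall.sq))
      = (v - v⁻¹)⁻¹ * (SDHall.sq⁻¹ * ((v - v⁻¹)⁻¹ * (SDHall.sq * (v ^ 2 * v⁻¹)))) := by
    rw [c_val, hvs]; field_simp [hs, hs4, hb0, hb1, hb2, hb5, hb6]
  have f2 : (v - v⁻¹)⁻¹ * (SDHall.sq * ((v - v⁻¹)⁻¹ * SDHall.sq⁻¹))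
      = (v - v⁻¹)⁻¹ * (SDHall.sq⁻¹ * ((v - v⁻¹)⁻¹ * (SDHall.sq⁻¹ * (v⁻¹ * v ^ 2)))) := by
    rw [c_val, hvs]; field_simp [hs, hs4, hb0, hb1, hb2, hb5, hb6]
  have f3 : (v - v⁻¹)⁻¹ * (SDHall.sq⁻¹ * ((v - v⁻¹)⁻¹ * (SDHall.sq⁻¹ * (v⁻¹ * ((1:F₀) - v ^ 2)))))
      - (v - v⁻¹)⁻¹ * (SDHall.sq⁻¹ * ((v - v⁻¹)⁻¹ * (SDHall.sq * ((1:F₀) - v ^ 2)))) = 1 := by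
    rw [c_val, hvs]; field_simp [hs, hs4, hb0, hb1, hb2, hb5, hb6]
    ring
  rw [f1, f2]
  have collect : ∀ (A B G1 G2 : F₀) (X1 X2 : R), G2 - G1 = 1 →
      A•X1 - B•X2 - (A•X1 + G1•y - (B•X2 + G2•y)) = y := by
    intro A B G1 G2 X1 X2 h
    have e : A•X1 - B•X2 - (A•X1 + G1•y - (B•X2 + G2•y)) = (G2 - G1)•y := by
      rw [sub_smul]; abel
    rw [e, h, one_smul]
  exact collect _ _ _ _ _ _ f3

end Aux

/-- For `a_{ij} = −1` and `m ∈ ℤ`,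
`σᵢ(σⱼ(σᵢ(E_{i,m}))) = E_{j,m+1}K_{j,m}⁻¹` in `𝒜`. -/
theorem sigma_braid_on_E (I : Type) [Fintype I] (a : I → I → ℤ)
    (hA : IsCartan a) (i j : I) (hij : a i j = -1)
    (σi σj : A a →ₐ[F₀] A a) (hi : SigmaSpec a i σi) (hj : SigmaSpec a j σj) (m : ℤ) :
    σi (σj (σi (E a i m))) = E a j (m + 1) * Kinv a j m := by
  obtain ⟨hsym, hdiag, -⟩ := hA
  have hji : a j i = -1 := (hsym j i).trans hij
  have hne : i ≠ j := by
    intro h; rw [h, hdiag j] at hij; omega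
  have s1 : σi (E a i m) = E a i (m+1) * Kinv a i m := hi.1 m
  have hσjKinv : σj (Kinv a i m) = Kinv a i m * Kinv a j m := by
    refine sigma_Kinv σj i m (K a j m * K a i m) _ (hj.2.2.2.2.1 i m hji) ?_
    rw [mul_assoc, ← mul_assoc (K a i m), K_Kinv, one_mul, K_Kinv]
  have s2 : σj (σi (E a i m)) = T a j i (m+1) * (Kinv a i m * Kinv a j m) := by
    rw [s1, map_mul, hj.2.1 i (m+1) hji, hσjKinv]
  have hσiKinv_i : σi (Kinv a i m) = K a i m :=
    sigma_Kinv σi i m (Kinv a i m) (K a i m) (hi.2.2.2.1 m) (Kinv_K i m)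
  have hσiKinv_j : σi (Kinv a j m) = Kinv a j m * Kinv a i m := by
    refine sigma_Kinv σi j m (K a i m * K a j m) _ (hi.2.2.2.2.1 j m hij) ?_
    rw [mul_assoc, ← mul_assoc (K a j m), K_Kinv, one_mul, K_Kinv]
  have s3 : σi (σj (σi (E a i m)))
      = σi (T a j i (m+1)) * (K a i m * (Kinv a j m * Kinv a i m)) := by
    rw [s2, map_mul, map_mul, hσiKinv_i, hσiKinv_j]
  have tail : K a i m * (Kinv a j m * Kinv a i m) = Kinv a j m := by
    rw [K_comm, mul_assoc, Kinv_K, mul_one]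
  have hσiT : σi (T a j i (m+1))
      = (v - v⁻¹)⁻¹ • (SDHall.sq • (((v - v⁻¹)⁻¹ • (SDHall.sq • (E a i (m+1) * E a j (m+1))
            - SDHall.sq⁻¹ • (E a j (m+1) * E a i (m+1)))) * (E a i (m+1+1) * Kinv a i (m+1)))
        - SDHall.sq⁻¹ • ((E a i (m+1+1) * Kinv a i (m+1)) * ((v - v⁻¹)⁻¹ •
            (SDHall.sq • (E a i (m+1) * E a j (m+1))
              - SDHall.sq⁻¹ • (E a j (m+1) * E a i (m+1)))))) := by
    rw [T]
    simp only [map_smul, map_sub, map_mul]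
    rw [hi.2.1 j (m+1) hij, hi.1 (m+1), T]
  have h1 : (E a i (m+1+1) * Kinv a i (m+1)) * E a i (m+1)
      = (v^2) • (E a i (m+1) * (E a i (m+1+1) * Kinv a i (m+1)))
        + ((1:F₀) - v^2) • (1 : A a) := by
    have e := E_rel_eq (a := a) i (m+1)
    rw [hdiag i, zpow_two, ← pow_two] at e
    calc (E a i (m+1+1) * Kinv a i (m+1)) * E a i (m+1)
        = (E a i (m+1+1) * E a i (m+1)) * Kinv a i (m+1) := by
          rw [mul_assoc, Kinv_comm i (m+1) (E a i (m+1)), ← mul_assoc]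
      _ = ((v^2) • (E a i (m+1) * E a i (m+1+1)) + ((1:F₀) - v^2) • K a i (m+1))
            * Kinv a i (m+1) := by rw [e]
      _ = (v^2) • (E a i (m+1) * (E a i (m+1+1) * Kinv a i (m+1)))
            + ((1:F₀) - v^2) • (1 : A a) := by
          rw [add_mul, smul_mul_assoc, smul_mul_assoc, K_Kinv, mul_assoc]
  have h2 : (E a i (m+1+1) * Kinv a i (m+1)) * E a j (m+1)
      = v⁻¹ • (E a j (m+1) * (E a i (m+1+1) * Kinv a i (m+1))) := by
    have e := E_rel_ne (a := a) i j (m+1) hne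
    rw [hij, zpow_neg_one] at e
    calc (E a i (m+1+1) * Kinv a i (m+1)) * E a j (m+1)
        = (E a i (m+1+1) * E a j (m+1)) * Kinv a i (m+1) := by
          rw [mul_assoc, Kinv_comm i (m+1) (E a j (m+1)), ← mul_assoc]
      _ = (v⁻¹ • (E a j (m+1) * E a i (m+1+1))) * Kinv a i (m+1) := by rw [e]
      _ = v⁻¹ • (E a j (m+1) * (E a i (m+1+1) * Kinv a i (m+1))) := by
          rw [smul_mul_assoc, mul_assoc]
  have hkey := key (E a i (m+1)) (E a j (m+1)) (E a i (m+1+1) * Kinv a i (m+1)) h1 h2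
  rw [s3, tail, hσiT, hkey]
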